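/- Expected value of the bootstrap covariance estimator under H₀: with Γ = E[h(X₁,X₂)h(X₁,X₃)ᵀ] and Γ₂ = E[h(X₁,X₂)h(X₁,X₂)ᵀ], the estimator Γ̂ₙ = (1/(n(n-1)²)) Σ_{i=1}^n Σ_{j=i+1}^n Σ_{k=i+1}^n h(Xᵢ,Xⱼ)h(Xᵢ,Xₖ)ᵀ satisfies E[Γ̂ₙ] = ((n-2)/(3(n-1))) Γ + (1/(2(n-1))) Γ₂. -/

import Mathlib

open MeasureTheory ProbabilityTheory Finset

private lemma sum_range_cast_real (n : ℕ) :
    ∑ m ∈ Finset.range n, (m : ℝ) = n * (n - 1) / 2 := by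
  induction n with
  | zero => simp
  | succ k ih => rw [Finset.sum_range_succ, ih]; push_cast; ring

private lemma sum_range_cast_real2 (n : ℕ) :
    ∑ m ∈ Finset.range n, (m : ℝ) * ((m : ℝ) - 1) = n * (n - 1) * (n - 2) / 3 := by
  induction n with
  | zero => simp
  | succ k ih => rw [Finset.sum_range_succ, ih]; push_cast; ring

/-- Expected value of the bootstrap covariance estimator under `H₀`: with
`Γ = E[h(X₁,X₂)h(X₁,X₃)ᵀ]` and `Γ₂ = E[h(X₁,X₂)h(X₁,X₂)ᵀ]`, the estimator
`Γ̂ₙ = (1/(n(n-1)²)) ∑_i ∑_{j>i} ∑_{k>i} h(Xᵢ,Xⱼ)h(Xᵢ,Xₖ)ᵀ` satisfies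
`E[Γ̂ₙ] = ((n-2)/(3(n-1))) Γ + (1/(2(n-1))) Γ₂` entrywise. -/
theorem expected_bootstrap_covariance
    {Ω : Type*} [MeasurableSpace Ω] (μ : Measure Ω) [IsProbabilityMeasure μ]
    {p d n : ℕ} (hn : 3 ≤ n)
    (F : Measure (Fin p → ℝ)) [IsProbabilityMeasure F]
    (X : Fin n → Ω → (Fin p → ℝ))
    (hXmeas : ∀ i, Measurable (X i))
    (hindep : iIndepFun X μ)
    (hXdist : ∀ i, Measure.map (X i) μ = F)
    (h : (Fin p → ℝ) → (Fin p → ℝ) → (Fin d → ℝ))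
    (hmeas : Measurable (fun z : (Fin p → ℝ) × (Fin p → ℝ) => h z.1 z.2))
    (hint3 : ∀ a b : Fin d,
      Integrable
        (fun z : (Fin p → ℝ) × ((Fin p → ℝ) × (Fin p → ℝ)) =>
          h z.1 z.2.1 a * h z.1 z.2.2 b) (F.prod (F.prod F)))
    (hint2 : ∀ a b : Fin d,
      Integrable
        (fun z : (Fin p → ℝ) × (Fin p → ℝ) => h z.1 z.2 a * h z.1 z.2 b) (F.prod F)) :
    ∀ a b : Fin d,
      ∫ ω, (1 / ((n : ℝ) * ((n : ℝ) - 1) ^ 2)) *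
          ∑ i : Fin n, ∑ j ∈ Finset.Ioi i, ∑ k ∈ Finset.Ioi i,
            h (X i ω) (X j ω) a * h (X i ω) (X k ω) b ∂μ
        = (((n : ℝ) - 2) / (3 * ((n : ℝ) - 1))) *
            (∫ z : (Fin p → ℝ) × ((Fin p → ℝ) × (Fin p → ℝ)),
              h z.1 z.2.1 a * h z.1 z.2.2 b ∂(F.prod (F.prod F)))
          + (1 / (2 * ((n : ℝ) - 1))) *
              (∫ z : (Fin p → ℝ) × (Fin p → ℝ), h z.1 z.2 a * h z.1 z.2 b ∂(F.prod F)) := by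
  intro a b
  set Γ : ℝ := ∫ z : (Fin p → ℝ) × ((Fin p → ℝ) × (Fin p → ℝ)),
      h z.1 z.2.1 a * h z.1 z.2.2 b ∂(F.prod (F.prod F)) with hΓ
  set Γ₂ : ℝ := ∫ z : (Fin p → ℝ) × (Fin p → ℝ), h z.1 z.2 a * h z.1 z.2 b ∂(F.prod F) with hΓ₂
  have hXae : ∀ i, AEMeasurable (X i) μ := fun i => (hXmeas i).aemeasurable
  -- pair and triple distributions
  have hpair : ∀ i j : Fin n, i ≠ j →
      Measure.map (fun ω => (X i ω, X j ω)) μ = F.prod F := by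
    intro i j hij
    rw [(indepFun_iff_map_prod_eq_prod_map_map (hXae i) (hXae j)).mp (hindep.indepFun hij),
      hXdist i, hXdist j]
  have htriple : ∀ i j k : Fin n, i ≠ j → i ≠ k → j ≠ k →
      Measure.map (fun ω => (X i ω, (X j ω, X k ω))) μ = F.prod (F.prod F) := by
    intro i j k hij hik hjk
    have hind : IndepFun (X i) (fun ω => (X j ω, X k ω)) μ :=
      (hindep.indepFun_prodMk hXmeas j k i hij.symm hik.symm).symm
    have hpm : AEMeasurable (fun ω => (X j ω, X k ω)) μ :=
      ((hXmeas j).prodMk (hXmeas k)).aemeasurable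
    rw [(indepFun_iff_map_prod_eq_prod_map_map (hXae i) hpm).mp hind, hXdist i,
      hpair j k hjk]
  -- measurability of the integrands
  have hm3 : Measurable (fun z : (Fin p → ℝ) × ((Fin p → ℝ) × (Fin p → ℝ)) =>
      h z.1 z.2.1 a * h z.1 z.2.2 b) := by
    exact ((measurable_pi_apply a).comp
        (hmeas.comp (measurable_fst.prodMk (measurable_fst.comp measurable_snd)))).mul
      ((measurable_pi_apply b).comp
        (hmeas.comp (measurable_fst.prodMk (measurable_snd.comp measurable_snd))))
  have hm2 : Measurable (fun z : (Fin p → ℝ) × (Fin p → ℝ) =>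
      h z.1 z.2 a * h z.1 z.2 b) :=
    ((measurable_pi_apply a).comp hmeas).mul ((measurable_pi_apply b).comp hmeas)
  -- expectation of the off-diagonal and diagonal terms
  have hEoff : ∀ i j k : Fin n, i ≠ j → i ≠ k → j ≠ k →
      ∫ ω, h (X i ω) (X j ω) a * h (X i ω) (X k ω) b ∂μ = Γ := by
    intro i j k hij hik hjk
    have hφ : AEMeasurable (fun ω => (X i ω, (X j ω, X k ω))) μ :=
      ((hXmeas i).prodMk ((hXmeas j).prodMk (hXmeas k))).aemeasurable
    rw [hΓ, ← htriple i j k hij hik hjk,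
      integral_map hφ hm3.aestronglyMeasurable]
  have hEdiag : ∀ i j : Fin n, i ≠ j →
      ∫ ω, h (X i ω) (X j ω) a * h (X i ω) (X j ω) b ∂μ = Γ₂ := by
    intro i j hij
    have hφ : AEMeasurable (fun ω => (X i ω, X j ω)) μ :=
      ((hXmeas i).prodMk (hXmeas j)).aemeasurable
    rw [hΓ₂, ← hpair i j hij, integral_map hφ hm2.aestronglyMeasurable]
  -- integrability of each summand
  have hIoff : ∀ i j k : Fin n, i ≠ j → i ≠ k → j ≠ k →
      Integrable (fun ω => h (X i ω) (X j ω) a * h (X i ω) (X k ω) b) μ := by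
    intro i j k hij hik hjk
    have hφ : AEMeasurable (fun ω => (X i ω, (X j ω, X k ω))) μ :=
      ((hXmeas i).prodMk ((hXmeas j).prodMk (hXmeas k))).aemeasurable
    have := hint3 a b
    rw [← htriple i j k hij hik hjk] at this
    exact (integrable_map_measure hm3.aestronglyMeasurable hφ).mp this
  have hIdiag : ∀ i j : Fin n, i ≠ j →
      Integrable (fun ω => h (X i ω) (X j ω) a * h (X i ω) (X j ω) b) μ := by
    intro i j hij
    have hφ : AEMeasurable (fun ω => (X i ω, X j ω)) μ :=
      ((hXmeas i).prodMk (hXmeas j)).aemeasurable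
    have := hint2 a b
    rw [← hpair i j hij] at this
    exact (integrable_map_measure hm2.aestronglyMeasurable hφ).mp this
  have hInt : ∀ i : Fin n, ∀ j ∈ Finset.Ioi i, ∀ k ∈ Finset.Ioi i,
      Integrable (fun ω => h (X i ω) (X j ω) a * h (X i ω) (X k ω) b) μ := by
    intro i j hj k hk
    have hij : i ≠ j := ne_of_lt (Finset.mem_Ioi.mp hj)
    have hik : i ≠ k := ne_of_lt (Finset.mem_Ioi.mp hk)
    rcases eq_or_ne j k with rfl | hjk
    · exact hIdiag i j hij
    · exact hIoff i j k hij hik hjk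
  -- key: inner double sum expectation for each i
  have key : ∀ i : Fin n,
      ∫ ω, ∑ j ∈ Finset.Ioi i, ∑ k ∈ Finset.Ioi i,
          h (X i ω) (X j ω) a * h (X i ω) (X k ω) b ∂μ
        = ((Finset.Ioi i).card : ℝ) * (((Finset.Ioi i).card : ℝ) - 1) * Γ
          + ((Finset.Ioi i).card : ℝ) * Γ₂ := by
    intro i
    rw [integral_finset_sum _ (fun j hj =>
      integrable_finset_sum _ (fun k hk => hInt i j hj k hk))]
    have step : ∀ j ∈ Finset.Ioi i,
        (∫ ω, ∑ k ∈ Finset.Ioi i,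
            h (X i ω) (X j ω) a * h (X i ω) (X k ω) b ∂μ)
          = ((Finset.Ioi i).card : ℝ) * Γ + (Γ₂ - Γ) := by
      intro j hj
      rw [integral_finset_sum _ (fun k hk => hInt i j hj k hk)]
      have : ∀ k ∈ Finset.Ioi i,
          (∫ ω, h (X i ω) (X j ω) a * h (X i ω) (X k ω) b ∂μ)
            = Γ + (if j = k then Γ₂ - Γ else 0) := by
        intro k hk
        have hij : i ≠ j := ne_of_lt (Finset.mem_Ioi.mp hj)
        have hik : i ≠ k := ne_of_lt (Finset.mem_Ioi.mp hk)
        rcases eq_or_ne j k with rfl | hjk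
        · simp [hEdiag i j hij]
        · simp [hjk, hEoff i j k hij hik hjk]
      rw [Finset.sum_congr rfl this, Finset.sum_add_distrib, Finset.sum_const,
        Finset.sum_ite_eq, if_pos hj]
      ring
    rw [Finset.sum_congr rfl step, Finset.sum_const]
    ring
  -- put everything together
  rw [integral_const_mul, integral_finset_sum _ (fun i _ =>
    integrable_finset_sum _ (fun j hj => integrable_finset_sum _ (fun k hk => hInt i j hj k hk)))]
  rw [Finset.sum_congr rfl (fun i _ => key i)]
  have hcard : ∀ i : Fin n, (Finset.Ioi i).card = n - 1 - (i : ℕ) := fun i => Fin.card_Ioi i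
  have hsum1 : ∑ i : Fin n, ((Finset.Ioi i).card : ℝ) = n * (n - 1) / 2 := by
    simp only [hcard]
    rw [Fin.sum_univ_eq_sum_range (fun m => ((n - 1 - m : ℕ) : ℝ)),
      Finset.sum_range_reflect (fun m => (m : ℝ)) n, sum_range_cast_real]
  have hsum2 : ∑ i : Fin n, ((Finset.Ioi i).card : ℝ) * (((Finset.Ioi i).card : ℝ) - 1)
      = n * (n - 1) * (n - 2) / 3 := by
    simp only [hcard]
    rw [Fin.sum_univ_eq_sum_range (fun m => ((n - 1 - m : ℕ) : ℝ) * (((n - 1 - m : ℕ) : ℝ) - 1)),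
      Finset.sum_range_reflect (fun m => (m : ℝ) * ((m : ℝ) - 1)) n, sum_range_cast_real2]
  have expand : ∑ i : Fin n,
      (((Finset.Ioi i).card : ℝ) * (((Finset.Ioi i).card : ℝ) - 1) * Γ
        + ((Finset.Ioi i).card : ℝ) * Γ₂)
      = (n * (n - 1) * (n - 2) / 3) * Γ + (n * (n - 1) / 2) * Γ₂ := by
    rw [Finset.sum_add_distrib, ← Finset.sum_mul, ← Finset.sum_mul, hsum1, hsum2]
  rw [expand]
  have hn0 : (n : ℝ) ≠ 0 := by positivity
  have hn1 : (n : ℝ) - 1 ≠ 0 := by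
    have : (3 : ℝ) ≤ (n : ℝ) := by exact_mod_cast hn
    linarith
  field_simp
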